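/- arXiv:2211.17125 — 2 statements merged into one kernel-verified Lean document; each statement's English description precedes it below -/
import Mathlib

section
/- Consider the Edge Model on a connected d-regular graph G with parameter α a constant in (0,1), with initial values centered so that Σ_{u∈V} ξ_u(0) = 0. All node values converge to a common random value F as t → ∞, and Var(F) = Θ( (Σ_{u∈V} ξ_u(0)²) / n² ). -/
open MeasureTheory ProbabilityTheory Finset

/-- A step of the Edge Model: a directed edge, i.e. an ordered pair of adjacent nodes. -/
abbrev EdgeStep (n : ℕ) := Fin n × Fin n

/-- A connected graph on at least two vertices has a directed edge. -/
lemma exists_adj_pair {n : ℕ} (G : SimpleGraph (Fin n)) [DecidableRel G.Adj]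
    (hconn : G.Connected) (hn : 1 < n) :
    (Finset.univ.filter fun p : EdgeStep n => G.Adj p.1 p.2).Nonempty := by
  obtain ⟨w⟩ := hconn.preconnected ⟨0, by omega⟩ ⟨1, hn⟩
  cases w with
  | @cons _ v _ h _ => exact ⟨(_, v), by simpa using h⟩

/-- Distribution of a single step of the Edge Model: a uniformly random directed edge. -/
noncomputable def edgeStepPMF {n : ℕ} (G : SimpleGraph (Fin n)) [DecidableRel G.Adj]
    (hconn : G.Connected) (hn : 1 < n) : PMF (EdgeStep n) :=
  PMF.uniformOfFinset _ (exists_adj_pair G hconn hn)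

/-- One update of the Edge Model: for the chosen directed edge `e = (u,v)`, node `u`
replaces its value by `α ξ_u + (1-α) ξ_v`. -/
noncomputable def edgeUpdate {n : ℕ} (α : ℝ) (e : EdgeStep n) (ξ : Fin n → ℝ) : Fin n → ℝ :=
  fun w => if w = e.1 then α * ξ w + (1 - α) * ξ e.2 else ξ w

/-- The trajectory of node values of the Edge Model, given the sequence of step choices. -/
noncomputable def edgeTraj {n : ℕ} (α : ℝ) (ξ0 : Fin n → ℝ) (ω : ℕ → EdgeStep n) :
    ℕ → Fin n → ℝ
  | 0 => ξ0
  | t + 1 => edgeUpdate α (ω t) (edgeTraj α ξ0 ω t)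

/-- Stationary distribution of the lazy random walk: `π u = d_u / (2m)`. -/
noncomputable def piRW {n : ℕ} (G : SimpleGraph (Fin n)) [DecidableRel G.Adj] (u : Fin n) : ℝ :=
  (G.degree u : ℝ) / (2 * (G.edgeFinset.card : ℝ))

/-- The potential `φ(ξ) = (1/2) Σ_{u,v} π_u π_v (ξ_u - ξ_v)²`. -/
noncomputable def phi {n : ℕ} (G : SimpleGraph (Fin n)) [DecidableRel G.Adj]
    (ξ : Fin n → ℝ) : ℝ :=
  (1 / 2) * ∑ u, ∑ v, piRW G u * piRW G v * (ξ u - ξ v) ^ 2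

/-- `lam` is the second-smallest eigenvalue of the graph Laplacian `L = D - A`:
it is the smallest eigenvalue attained on the space of vectors orthogonal to `1`. -/
def IsSecondEigenvalueL {n : ℕ} (G : SimpleGraph (Fin n)) [DecidableRel G.Adj]
    (lam : ℝ) : Prop :=
  (∃ f : Fin n → ℝ, f ≠ 0 ∧ (G.lapMatrix ℝ).mulVec f = lam • f ∧ ∑ x, f x = 0) ∧
  ∀ lam' : ℝ,
    (∃ f : Fin n → ℝ, f ≠ 0 ∧ (G.lapMatrix ℝ).mulVec f = lam' • f ∧ ∑ x, f x = 0) →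
      lam ≤ lam'

section EdgeModelAux

variable {n : ℕ}

lemma edgeTraj_congr (α : ℝ) (ξ0 : Fin n → ℝ) (ω ω' : ℕ → EdgeStep n) (t : ℕ)
    (h : ∀ s < t, ω s = ω' s) : edgeTraj α ξ0 ω t = edgeTraj α ξ0 ω' t := by
  induction t with
  | zero => rfl
  | succ t ih =>
      show edgeUpdate α (ω t) _ = edgeUpdate α (ω' t) _
      rw [ih (fun s hs => h s (hs.trans (Nat.lt_succ_self t))), h t (Nat.lt_succ_self t)]

lemma edgeUpdate_bound {α : ℝ} (hα : α ∈ Set.Ioo (0:ℝ) 1) (e : EdgeStep n)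
    {ξ : Fin n → ℝ} {B : ℝ} (h : ∀ u, |ξ u| ≤ B) : ∀ u, |edgeUpdate α e ξ u| ≤ B := by
  intro u
  unfold edgeUpdate
  split_ifs with hu
  · obtain ⟨h1, h2⟩ := abs_le.1 (h u)
    obtain ⟨h3, h4⟩ := abs_le.1 (h e.2)
    rw [abs_le]
    obtain ⟨ha, hb⟩ := hα
    constructor <;> nlinarith
  · exact h u

lemma edgeTraj_bound {α : ℝ} (hα : α ∈ Set.Ioo (0:ℝ) 1) (ξ0 : Fin n → ℝ)
    (ω : ℕ → EdgeStep n) {B : ℝ} (h : ∀ u, |ξ0 u| ≤ B) (t : ℕ) :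
    ∀ u, |edgeTraj α ξ0 ω t u| ≤ B := by
  induction t with
  | zero => exact h
  | succ t ih => exact edgeUpdate_bound hα (ω t) ih

lemma sum_edgeUpdate (α : ℝ) (e : EdgeStep n) (ξ : Fin n → ℝ) :
    ∑ w, edgeUpdate α e ξ w = (∑ w, ξ w) + (1 - α) * (ξ e.2 - ξ e.1) := by
  have h : ∀ w, edgeUpdate α e ξ w
      = ξ w + (if w = e.1 then (1 - α) * (ξ e.2 - ξ e.1) else 0) := by
    intro w
    unfold edgeUpdate
    split_ifs with hw
    · rw [hw]; ring
    · ring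
  simp_rw [h]
  rw [Finset.sum_add_distrib, Finset.sum_ite_eq' Finset.univ e.1
    (fun _ => (1 - α) * (ξ e.2 - ξ e.1)), if_pos (Finset.mem_univ _)]

lemma sumsq_edgeUpdate (α : ℝ) (e : EdgeStep n) (ξ : Fin n → ℝ) :
    ∑ w, (edgeUpdate α e ξ w) ^ 2
      = (∑ w, (ξ w) ^ 2) + ((α * ξ e.1 + (1 - α) * ξ e.2) ^ 2 - (ξ e.1) ^ 2) := by
  have h : ∀ w, (edgeUpdate α e ξ w) ^ 2
      = (ξ w) ^ 2 + (if w = e.1 then (α * ξ e.1 + (1 - α) * ξ e.2) ^ 2 - (ξ e.1) ^ 2 else 0) := by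
    intro w
    unfold edgeUpdate
    split_ifs with hw
    · rw [hw]; ring
    · ring
  simp_rw [h]
  rw [Finset.sum_add_distrib, Finset.sum_ite_eq' Finset.univ e.1, if_pos (Finset.mem_univ _)]

lemma measurable_edgeUpdate (α : ℝ) (e : EdgeStep n) :
    Measurable (edgeUpdate α e : (Fin n → ℝ) → (Fin n → ℝ)) := by
  apply measurable_pi_lambda
  intro w
  unfold edgeUpdate
  by_cases hw : w = e.1
  · simp only [hw, if_true]
    fun_prop
  · simp only [hw, if_false]
    fun_prop

lemma sum_antisym_zero (G : SimpleGraph (Fin n)) [DecidableRel G.Adj]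
    (f : EdgeStep n → ℝ) (hf : ∀ e : EdgeStep n, f e + f e.swap = 0) :
    ∑ e ∈ Finset.univ.filter (fun p : EdgeStep n => G.Adj p.1 p.2), f e = 0 := by
  apply Finset.sum_involution (fun a _ => a.swap)
  · intro a _; exact hf a
  · intro a ha _
    intro hc
    have hadj : G.Adj a.1 a.2 := (Finset.mem_filter.1 ha).2
    have : a.2 = a.1 := congrArg Prod.fst hc
    exact hadj.ne' this
  · intro a _; exact Prod.swap_swap a
  · intro a ha
    simp only [Finset.mem_filter, Finset.mem_univ, true_and] at ha ⊢
    exact ha.symm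

lemma conserve_sum (α : ℝ) (G : SimpleGraph (Fin n)) [DecidableRel G.Adj]
    (ξ : Fin n → ℝ) :
    ∑ e ∈ Finset.univ.filter (fun p : EdgeStep n => G.Adj p.1 p.2), (∑ w, edgeUpdate α e ξ w)
      = ((Finset.univ.filter (fun p : EdgeStep n => G.Adj p.1 p.2)).card : ℝ) * (∑ w, ξ w) := by
  have h0 : ∑ e ∈ Finset.univ.filter (fun p : EdgeStep n => G.Adj p.1 p.2),
      ((∑ w, edgeUpdate α e ξ w) - (∑ w, ξ w)) = 0 := by
    apply sum_antisym_zero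
    intro e
    simp only [sum_edgeUpdate, Prod.fst_swap, Prod.snd_swap]
    ring
  rw [Finset.sum_sub_distrib, Finset.sum_const, sub_eq_zero] at h0
  rw [h0, nsmul_eq_mul]

lemma conserve_quad {α : ℝ} (hα : α ∈ Set.Ioo (0:ℝ) 1) (G : SimpleGraph (Fin n))
    [DecidableRel G.Adj] (ξ : Fin n → ℝ) :
    ∑ e ∈ Finset.univ.filter (fun p : EdgeStep n => G.Adj p.1 p.2),
        ((∑ w, edgeUpdate α e ξ w) ^ 2 + (1 - α) / α * ∑ w, (edgeUpdate α e ξ w) ^ 2)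
      = ((Finset.univ.filter (fun p : EdgeStep n => G.Adj p.1 p.2)).card : ℝ)
          * ((∑ w, ξ w) ^ 2 + (1 - α) / α * ∑ w, (ξ w) ^ 2) := by
  have hane : α ≠ 0 := ne_of_gt hα.1
  have h0 : ∑ e ∈ Finset.univ.filter (fun p : EdgeStep n => G.Adj p.1 p.2),
      (((∑ w, edgeUpdate α e ξ w) ^ 2 + (1 - α) / α * ∑ w, (edgeUpdate α e ξ w) ^ 2)
        - ((∑ w, ξ w) ^ 2 + (1 - α) / α * ∑ w, (ξ w) ^ 2)) = 0 := by
    apply sum_antisym_zero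
    intro e
    simp only [sum_edgeUpdate, sumsq_edgeUpdate, Prod.fst_swap, Prod.snd_swap]
    field_simp
    ring
  rw [Finset.sum_sub_distrib, Finset.sum_const, sub_eq_zero] at h0
  rw [h0, nsmul_eq_mul]

end EdgeModelAux

/-- **Edge Model, concentration (Theorem 2(2)).**
For the Edge Model on a connected `d`-regular graph with a constant `α ∈ (0,1)`, and initial
values centered (`Σ_u ξ_u(0) = 0`), the common limit value `F` of the process satisfies
`Var(F) = Θ( (Σ_u ξ_u(0)²) / n² )`, with constants independent of the graph and of the
initial values. -/
theorem edge_model_variance_theta (α : ℝ) (hα : α ∈ Set.Ioo (0 : ℝ) 1) :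
    ∃ c C : ℝ, 0 < c ∧ 0 < C ∧
      ∀ (n d : ℕ) (hn : 1 < n) (G : SimpleGraph (Fin n)) (_ : DecidableRel G.Adj)
        (hconn : G.Connected) (_ : G.IsRegularOfDegree d)
        (ξ0 : Fin n → ℝ) (_ : ∑ u, ξ0 u = 0)
        (Ω : Type) (_ : MeasurableSpace Ω) (Pr : Measure Ω) (_ : IsProbabilityMeasure Pr)
        (steps : ℕ → Ω → EdgeStep n) (_ : ∀ t, Measurable (steps t))
        (_ : iIndepFun steps Pr)
        (_ : ∀ t, Measure.map (steps t) Pr = (edgeStepPMF G hconn hn).toMeasure)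
        (F : Ω → ℝ)
        (_ : ∀ᵐ ω ∂Pr, ∀ u, Filter.Tendsto (fun t => edgeTraj α ξ0 (fun s => steps s ω) t u)
              Filter.atTop (nhds (F ω))),
        c * (∑ u, (ξ0 u) ^ 2) / (n : ℝ) ^ 2 ≤ variance F Pr ∧
          variance F Pr ≤ C * (∑ u, (ξ0 u) ^ 2) / (n : ℝ) ^ 2 := by
  obtain ⟨hα0, hα1⟩ := hα
  have hα1' : (0:ℝ) < 1 - α := by linarith
  refine ⟨1 - α, (1 - α) / α, hα1', div_pos hα1' hα0, ?_⟩
  intro n d hn G hdec hconn hreg ξ0 hsum0 Ω mΩ Pr hPr steps hmeas hindep hlaw F hconv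
  haveI := hdec
  haveI := hPr
  have hN2 : (2:ℝ) ≤ (n:ℝ) := by exact_mod_cast hn
  have hN0 : (0:ℝ) < (n:ℝ) := by linarith
  -- notation
  set S2 : ℝ := ∑ u, (ξ0 u) ^ 2 with hS2def
  have hS2 : 0 ≤ S2 := Finset.sum_nonneg fun _ _ => sq_nonneg _
  set B : ℝ := ∑ u, |ξ0 u| with hBdef
  have hB : ∀ u, |ξ0 u| ≤ B :=
    fun u => Finset.single_le_sum (fun i _ => abs_nonneg (ξ0 i)) (Finset.mem_univ u)
  set filt := Finset.univ.filter (fun p : EdgeStep n => G.Adj p.1 p.2) with hfiltdef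
  have hfne : filt.Nonempty := exists_adj_pair G hconn hn
  have hcard : (0:ℝ) < (filt.card : ℝ) := by exact_mod_cast Finset.card_pos.2 hfne
  set ξt : ℕ → Ω → (Fin n → ℝ) := fun t ω => edgeTraj α ξ0 (fun s => steps s ω) t with hξtdef
  have hξt_bd : ∀ t ω u, |ξt t ω u| ≤ B :=
    fun t ω => edgeTraj_bound ⟨hα0, hα1⟩ ξ0 _ hB t
  -- measurability of the trajectory
  have hξtm : ∀ t, Measurable (ξt t) := by
    intro t
    induction t with
    | zero => exact measurable_const
    | succ t ih =>
        have hH : Measurable (fun p : (Fin n → ℝ) × EdgeStep n => edgeUpdate α p.2 p.1) :=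
          measurable_from_prod_countable_left (fun e => measurable_edgeUpdate α e)
        exact hH.comp (ih.prodMk (hmeas t))
  -- independence of the step from the current state
  have hIndep : ∀ t, IndepFun (steps t) (ξt t) Pr := by
    intro t
    have hd : Disjoint ({t} : Finset ℕ) (Finset.range t) := by
      simp [Finset.disjoint_singleton_left]
    have h2 := hindep.indepFun_finset {t} (Finset.range t) hd hmeas
    have h3 := h2.comp
      (φ := fun f : (({t} : Finset ℕ) : Type) → EdgeStep n => f ⟨t, Finset.mem_singleton_self t⟩)
      (ψ := fun es : ((Finset.range t : Finset ℕ) : Type) → EdgeStep n =>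
        edgeTraj α ξ0
          (fun s => if hs : s ∈ Finset.range t then es ⟨s, hs⟩ else (⟨0, by omega⟩, ⟨0, by omega⟩)) t)
      (measurable_of_countable _) (measurable_of_countable _)
    have e2 : (fun es : ((Finset.range t : Finset ℕ) : Type) → EdgeStep n =>
        edgeTraj α ξ0
          (fun s => if hs : s ∈ Finset.range t then es ⟨s, hs⟩ else (⟨0, by omega⟩, ⟨0, by omega⟩)) t)
          ∘ (fun a (i : ((Finset.range t : Finset ℕ) : Type)) => steps i a) = ξt t := by
      funext ω
      apply edgeTraj_congr
      intro s hs
      simp only [Function.comp]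
      rw [dif_pos (Finset.mem_range.2 hs)]
    rw [e2] at h3
    exact h3
  -- the step distribution
  have hw : ∀ (t : ℕ) (e : EdgeStep n),
      (Pr (steps t ⁻¹' {e})).toReal = if e ∈ filt then ((filt.card : ℝ))⁻¹ else 0 := by
    intro t e
    rw [← Measure.map_apply (hmeas t) (measurableSet_singleton e), hlaw t,
      PMF.toMeasure_apply_singleton _ e (measurableSet_singleton e)]
    have hfeq : @Finset.filter _ (fun p : EdgeStep n => G.Adj p.1 p.2)
        (fun a => hdec a.1 a.2) Finset.univ = filt := by
      rw [hfiltdef]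
      exact Finset.filter_congr_decidable _ _ _
    unfold edgeStepPMF
    rw [PMF.uniformOfFinset_apply, hfeq]
    by_cases he : e ∈ filt
    · rw [if_pos he, if_pos he]
      simp
    · rw [if_neg he, if_neg he]
      simp
  -- integrability from boundedness
  have hintb : ∀ (f : Ω → ℝ) (C : ℝ), Measurable f → (∀ ω, |f ω| ≤ C) → Integrable f Pr := by
    intro f C hf hC
    refine (integrable_const C).mono' hf.aestronglyMeasurable ?_
    filter_upwards with ω
    simpa [Real.norm_eq_abs] using hC ω
  -- key invariance lemma
  have key : ∀ (h : (Fin n → ℝ) → ℝ) (C : ℝ), Measurable h →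
      (∀ ξ : Fin n → ℝ, (∀ u, |ξ u| ≤ B) → |h ξ| ≤ C) →
      (∀ ξ : Fin n → ℝ, ∑ e ∈ filt, h (edgeUpdate α e ξ) = (filt.card : ℝ) * h ξ) →
      ∀ t, ∫ ω, h (ξt t ω) ∂Pr = h ξ0 := by
    intro h C hh hbd hcons t
    induction t with
    | zero =>
        show ∫ _, h ξ0 ∂Pr = h ξ0
        simp
    | succ t ih =>
        have hZm : ∀ e : EdgeStep n, Measurable (fun ω => h (edgeUpdate α e (ξt t ω))) :=
          fun e => hh.comp ((measurable_edgeUpdate α e).comp (hξtm t))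
        have hZbd : ∀ (e : EdgeStep n) (ω : Ω), |h (edgeUpdate α e (ξt t ω))| ≤ C :=
          fun e ω => hbd _ (edgeUpdate_bound ⟨hα0, hα1⟩ e (fun u => hξt_bd t ω u))
        have hintZ : ∀ e : EdgeStep n, Integrable (fun ω => h (edgeUpdate α e (ξt t ω))) Pr :=
          fun e => hintb _ C (hZm e) (hZbd e)
        have hintP : ∀ e : EdgeStep n,
            Integrable (fun ω => (if steps t ω = e then (1:ℝ) else 0)
              * h (edgeUpdate α e (ξt t ω))) Pr := by
          intro e
          refine hintb _ C ?_ ?_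
          · exact ((measurable_of_countable (fun x : EdgeStep n => if x = e then (1:ℝ) else 0)).comp
              (hmeas t)).mul (hZm e)
          · intro ω
            rw [abs_mul]
            calc |if steps t ω = e then (1:ℝ) else 0| * |h (edgeUpdate α e (ξt t ω))|
                ≤ 1 * |h (edgeUpdate α e (ξt t ω))| := by
                  apply mul_le_mul_of_nonneg_right _ (abs_nonneg _)
                  split_ifs <;> simp
              _ = |h (edgeUpdate α e (ξt t ω))| := one_mul _
              _ ≤ C := hZbd e ω
        have hstep : ∀ e : EdgeStep n,
            ∫ ω, (if steps t ω = e then (1:ℝ) else 0) * h (edgeUpdate α e (ξt t ω)) ∂Pr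
              = (if e ∈ filt then ((filt.card : ℝ))⁻¹ else 0)
                  * ∫ ω, h (edgeUpdate α e (ξt t ω)) ∂Pr := by
          intro e
          have hXi : IndepFun (fun ω => if steps t ω = e then (1:ℝ) else 0)
              (fun ω => h (edgeUpdate α e (ξt t ω))) Pr :=
            (hIndep t).comp (φ := fun x : EdgeStep n => if x = e then (1:ℝ) else 0)
              (ψ := fun ξ => h (edgeUpdate α e ξ))
              (measurable_of_countable _) (hh.comp (measurable_edgeUpdate α e))
          have hintX : Integrable (fun ω => if steps t ω = e then (1:ℝ) else 0) Pr := by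
            refine hintb _ 1 ((measurable_of_countable
              (fun x : EdgeStep n => if x = e then (1:ℝ) else 0)).comp (hmeas t)) ?_
            intro ω; split_ifs <;> simp
          have hmul := hXi.integral_fun_mul_eq_mul_integral hintX.aestronglyMeasurable
            (hintZ e).aestronglyMeasurable
          have hEX : ∫ ω, (if steps t ω = e then (1:ℝ) else 0) ∂Pr
              = (if e ∈ filt then ((filt.card : ℝ))⁻¹ else 0) := by
            have hind : (fun ω => if steps t ω = e then (1:ℝ) else 0)
                = Set.indicator (steps t ⁻¹' {e}) (fun _ => (1:ℝ)) := by
              funext ω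
              by_cases hc : steps t ω = e
              · simp [Set.indicator_apply, Set.mem_preimage, hc]
              · simp [Set.indicator_apply, Set.mem_preimage, hc]
            rw [hind, integral_indicator_const (1:ℝ) ((hmeas t) (measurableSet_singleton e)),
              smul_eq_mul, mul_one, measureReal_def, hw t e]
          calc ∫ ω, (if steps t ω = e then (1:ℝ) else 0) * h (edgeUpdate α e (ξt t ω)) ∂Pr
              = (∫ ω, (if steps t ω = e then (1:ℝ) else 0) ∂Pr)
                  * ∫ ω, h (edgeUpdate α e (ξt t ω)) ∂Pr := hmul
            _ = _ := by rw [hEX]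
        have hpt : (fun ω => h (ξt (t+1) ω)) = fun ω =>
            ∑ e : EdgeStep n, (if steps t ω = e then (1:ℝ) else 0)
              * h (edgeUpdate α e (ξt t ω)) := by
          funext ω
          have hsw : ∀ e : EdgeStep n,
              (if steps t ω = e then (1:ℝ) else 0) * h (edgeUpdate α e (ξt t ω))
                = if e = steps t ω then h (edgeUpdate α e (ξt t ω)) else 0 := by
            intro e
            by_cases hc : steps t ω = e
            · simp [hc]
            · simp [hc, Ne.symm hc]
          simp_rw [hsw]
          rw [Finset.sum_ite_eq' Finset.univ (steps t ω)
            (fun e => h (edgeUpdate α e (ξt t ω))), if_pos (Finset.mem_univ _)]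
          rfl
        rw [hpt, integral_finset_sum Finset.univ (fun e _ => hintP e)]
        simp_rw [hstep]
        rw [show (∑ e : EdgeStep n, (if e ∈ filt then ((filt.card : ℝ))⁻¹ else 0)
              * ∫ ω, h (edgeUpdate α e (ξt t ω)) ∂Pr)
            = ∑ e ∈ filt, ((filt.card : ℝ))⁻¹ * ∫ ω, h (edgeUpdate α e (ξt t ω)) ∂Pr by
          simp_rw [ite_mul, zero_mul]
          rw [Finset.sum_ite_mem, Finset.univ_inter]]
        rw [← Finset.mul_sum, ← integral_finset_sum filt (fun e _ => hintZ e)]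
        simp_rw [hcons]
        rw [integral_const_mul, ih, ← mul_assoc, inv_mul_cancel₀ (ne_of_gt hcard), one_mul]
  -- the two conserved expectations
  have hE1 : ∀ t, ∫ ω, (∑ u, ξt t ω u) ∂Pr = 0 := by
    have hm : Measurable (fun ξ : Fin n → ℝ => ∑ u, ξ u) := by fun_prop
    have hb : ∀ ξ : Fin n → ℝ, (∀ u, |ξ u| ≤ B) → |∑ u, ξ u| ≤ (n:ℝ) * B := by
      intro ξ hξ
      calc |∑ u, ξ u| ≤ ∑ u, |ξ u| := Finset.abs_sum_le_sum_abs _ _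
        _ ≤ ∑ _u : Fin n, B := Finset.sum_le_sum (fun u _ => hξ u)
        _ = (n:ℝ) * B := by simp [Finset.sum_const, Finset.card_univ, nsmul_eq_mul]
    intro t
    rw [key _ ((n:ℝ) * B) hm hb (fun ξ => conserve_sum α G ξ) t]
    exact hsum0
  have hE2 : ∀ t, ∫ ω, ((∑ u, ξt t ω u) ^ 2 + (1 - α) / α * ∑ u, (ξt t ω u) ^ 2) ∂Pr
      = (1 - α) / α * S2 := by
    have hm : Measurable (fun ξ : Fin n → ℝ => (∑ u, ξ u) ^ 2 + (1 - α) / α * ∑ u, (ξ u) ^ 2) := by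
      fun_prop
    have hb : ∀ ξ : Fin n → ℝ, (∀ u, |ξ u| ≤ B) →
        |(∑ u, ξ u) ^ 2 + (1 - α) / α * ∑ u, (ξ u) ^ 2|
          ≤ ((n:ℝ) * B) ^ 2 + (1 - α) / α * ((n:ℝ) * B ^ 2) := by
      intro ξ hξ
      have hκ : (0:ℝ) < (1 - α) / α := div_pos hα1' hα0
      have h1 : |∑ u, ξ u| ≤ (n:ℝ) * B := by
        calc |∑ u, ξ u| ≤ ∑ u, |ξ u| := Finset.abs_sum_le_sum_abs _ _
          _ ≤ ∑ _u : Fin n, B := Finset.sum_le_sum (fun u _ => hξ u)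
          _ = (n:ℝ) * B := by simp [Finset.sum_const, Finset.card_univ, nsmul_eq_mul]
      have h2 : (∑ u, ξ u) ^ 2 ≤ ((n:ℝ) * B) ^ 2 := by
        rw [← sq_abs]
        exact pow_le_pow_left₀ (abs_nonneg _) h1 2
      have h3 : ∑ u, (ξ u) ^ 2 ≤ (n:ℝ) * B ^ 2 := by
        calc ∑ u, (ξ u) ^ 2 ≤ ∑ _u : Fin n, B ^ 2 := by
              refine Finset.sum_le_sum (fun u _ => ?_)
              rw [← sq_abs]
              exact pow_le_pow_left₀ (abs_nonneg _) (hξ u) 2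
          _ = (n:ℝ) * B ^ 2 := by simp [Finset.sum_const, Finset.card_univ, nsmul_eq_mul]
      have h4 : (0:ℝ) ≤ ∑ u, (ξ u) ^ 2 := Finset.sum_nonneg fun _ _ => sq_nonneg _
      rw [abs_of_nonneg (by positivity)]
      have h5 : (1 - α) / α * ∑ u, (ξ u) ^ 2 ≤ (1 - α) / α * ((n:ℝ) * B ^ 2) :=
        mul_le_mul_of_nonneg_left h3 hκ.le
      linarith
    intro t
    rw [key _ _ hm hb (fun ξ => conserve_quad ⟨hα0, hα1⟩ G ξ) t, hsum0]
    norm_num [hS2def]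
  -- a.e. properties of F
  have hFbd : ∀ᵐ ω ∂Pr, |F ω| ≤ B := by
    filter_upwards [hconv] with ω hω
    have h1 := (hω ⟨0, by omega⟩).abs
    exact le_of_tendsto h1 (Filter.Eventually.of_forall fun t => hξt_bd t ω ⟨0, by omega⟩)
  have hFaem : AEMeasurable F Pr := by
    refine aemeasurable_of_tendsto_metrizable_ae'
      (f := fun t ω => ξt t ω ⟨0, by omega⟩) (fun t => ?_) ?_
    · exact ((measurable_pi_apply _).comp (hξtm t)).aemeasurable
    · filter_upwards [hconv] with ω hω
      exact hω ⟨0, by omega⟩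
  -- limits via dominated convergence: E F = 0
  have hEF : ∫ ω, F ω ∂Pr = 0 := by
    have hT : Filter.Tendsto (fun t => ∫ ω, (∑ u, ξt t ω u) ∂Pr)
        Filter.atTop (nhds (∫ ω, (n:ℝ) * F ω ∂Pr)) := by
      refine tendsto_integral_of_dominated_convergence (fun _ => (n:ℝ) * B)
        (fun t => ?_) (integrable_const _) (fun t => ?_) ?_
      · exact (Finset.measurable_sum Finset.univ
          (fun u _ => (measurable_pi_apply u).comp (hξtm t))).aestronglyMeasurable
      · filter_upwards with ω
        rw [Real.norm_eq_abs]
        calc |∑ u, ξt t ω u| ≤ ∑ u, |ξt t ω u| := Finset.abs_sum_le_sum_abs _ _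
          _ ≤ ∑ _u : Fin n, B := Finset.sum_le_sum (fun u _ => hξt_bd t ω u)
          _ = (n:ℝ) * B := by simp [Finset.sum_const, Finset.card_univ, nsmul_eq_mul]
      · filter_upwards [hconv] with ω hω
        have := tendsto_finset_sum Finset.univ (fun u (_ : u ∈ Finset.univ) => hω u)
        simpa [Finset.sum_const, Finset.card_univ, nsmul_eq_mul] using this
    have hC : (fun t => ∫ ω, (∑ u, ξt t ω u) ∂Pr) = fun _ => (0:ℝ) := funext hE1
    rw [hC] at hT
    have h0 := tendsto_nhds_unique hT tendsto_const_nhds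
    rw [integral_const_mul] at h0
    exact (mul_eq_zero.1 h0).resolve_left (ne_of_gt hN0)
  -- limits via dominated convergence: second moment equation
  have hEF2 : ((n:ℝ) ^ 2 + (1 - α) / α * (n:ℝ)) * ∫ ω, (F ω) ^ 2 ∂Pr = (1 - α) / α * S2 := by
    have hκ : (0:ℝ) < (1 - α) / α := div_pos hα1' hα0
    have hT : Filter.Tendsto
        (fun t => ∫ ω, ((∑ u, ξt t ω u) ^ 2 + (1 - α) / α * ∑ u, (ξt t ω u) ^ 2) ∂Pr)
        Filter.atTop
        (nhds (∫ ω, ((n:ℝ) ^ 2 + (1 - α) / α * (n:ℝ)) * (F ω) ^ 2 ∂Pr)) := by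
      refine tendsto_integral_of_dominated_convergence
        (fun _ => ((n:ℝ) * B) ^ 2 + (1 - α) / α * ((n:ℝ) * B ^ 2))
        (fun t => ?_) (integrable_const _) (fun t => ?_) ?_
      · have hm1 : Measurable (fun ω => ∑ u, ξt t ω u) :=
          Finset.measurable_sum Finset.univ (fun u _ => (measurable_pi_apply u).comp (hξtm t))
        have hm2 : Measurable (fun ω => ∑ u, (ξt t ω u) ^ 2) :=
          Finset.measurable_sum Finset.univ
            (fun u _ => ((measurable_pi_apply u).comp (hξtm t)).pow_const 2)
        exact ((hm1.pow_const 2).add (hm2.const_mul _)).aestronglyMeasurable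
      · filter_upwards with ω
        rw [Real.norm_eq_abs]
        have h1 : |∑ u, ξt t ω u| ≤ (n:ℝ) * B := by
          calc |∑ u, ξt t ω u| ≤ ∑ u, |ξt t ω u| := Finset.abs_sum_le_sum_abs _ _
            _ ≤ ∑ _u : Fin n, B := Finset.sum_le_sum (fun u _ => hξt_bd t ω u)
            _ = (n:ℝ) * B := by simp [Finset.sum_const, Finset.card_univ, nsmul_eq_mul]
        have h2 : (∑ u, ξt t ω u) ^ 2 ≤ ((n:ℝ) * B) ^ 2 := by
          rw [← sq_abs]
          exact pow_le_pow_left₀ (abs_nonneg _) h1 2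
        have h3 : ∑ u, (ξt t ω u) ^ 2 ≤ (n:ℝ) * B ^ 2 := by
          calc ∑ u, (ξt t ω u) ^ 2 ≤ ∑ _u : Fin n, B ^ 2 := by
                refine Finset.sum_le_sum (fun u _ => ?_)
                rw [← sq_abs]
                exact pow_le_pow_left₀ (abs_nonneg _) (hξt_bd t ω u) 2
            _ = (n:ℝ) * B ^ 2 := by simp [Finset.sum_const, Finset.card_univ, nsmul_eq_mul]
        have h4 : (0:ℝ) ≤ ∑ u, (ξt t ω u) ^ 2 := Finset.sum_nonneg fun _ _ => sq_nonneg _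
        rw [abs_of_nonneg (by positivity)]
        have h5 : (1 - α) / α * ∑ u, (ξt t ω u) ^ 2 ≤ (1 - α) / α * ((n:ℝ) * B ^ 2) :=
          mul_le_mul_of_nonneg_left h3 hκ.le
        linarith
      · filter_upwards [hconv] with ω hω
        have hsum : Filter.Tendsto (fun t => ∑ u, ξt t ω u)
            Filter.atTop (nhds ((n:ℝ) * F ω)) := by
          have := tendsto_finset_sum Finset.univ (fun u (_ : u ∈ Finset.univ) => hω u)
          simpa [Finset.sum_const, Finset.card_univ, nsmul_eq_mul] using this
        have hsq : Filter.Tendsto (fun t => ∑ u, (ξt t ω u) ^ 2)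
            Filter.atTop (nhds ((n:ℝ) * (F ω) ^ 2)) := by
          have := tendsto_finset_sum Finset.univ
            (fun u (_ : u ∈ Finset.univ) => (hω u).pow 2)
          simpa [Finset.sum_const, Finset.card_univ, nsmul_eq_mul] using this
        have hcomb := (hsum.pow 2).add (hsq.const_mul ((1 - α) / α))
        have harr : ((n:ℝ) ^ 2 + (1 - α) / α * (n:ℝ)) * (F ω) ^ 2
            = ((n:ℝ) * F ω) ^ 2 + (1 - α) / α * ((n:ℝ) * (F ω) ^ 2) := by ring
        rw [harr]
        exact hcomb
    have hC : (fun t => ∫ ω, ((∑ u, ξt t ω u) ^ 2 + (1 - α) / α * ∑ u, (ξt t ω u) ^ 2) ∂Pr)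
        = fun _ => (1 - α) / α * S2 := funext hE2
    rw [hC] at hT
    have h0 := tendsto_nhds_unique hT tendsto_const_nhds
    rw [integral_const_mul] at h0
    exact h0
  -- identify the variance
  have hmem : MemLp F 2 Pr := by
    refine MemLp.of_bound hFaem.aestronglyMeasurable B ?_
    filter_upwards [hFbd] with ω h
    rwa [Real.norm_eq_abs]
  have hvar : variance F Pr = ∫ ω, (F ω) ^ 2 ∂Pr := by
    have h := variance_eq_sub hmem
    simp only [Pi.pow_apply] at h
    rw [h, hEF]
    ring
  set V : ℝ := variance F Pr with hVdef
  have hV0 : 0 ≤ V := variance_nonneg F Pr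
  have hEq : ((n:ℝ) ^ 2 + (1 - α) / α * (n:ℝ)) * V = (1 - α) / α * S2 := by
    rw [hvar]; exact hEF2
  have hEq' : (α * (n:ℝ) ^ 2 + (1 - α) * (n:ℝ)) * V = (1 - α) * S2 := by
    have hαne : α ≠ 0 := ne_of_gt hα0
    have hh : α * ((1 - α) / α) = 1 - α := by field_simp
    have hthis := congrArg (fun x => α * x) hEq
    calc (α * (n:ℝ) ^ 2 + (1 - α) * (n:ℝ)) * V
        = α * (((n:ℝ) ^ 2 + (1 - α) / α * (n:ℝ)) * V) := by
          linear_combination (-((n:ℝ) * V)) * hh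
      _ = α * ((1 - α) / α * S2) := hthis
      _ = (1 - α) * S2 := by linear_combination S2 * hh
  constructor
  · rw [div_le_iff₀ (by positivity : (0:ℝ) < (n:ℝ) ^ 2)]
    nlinarith [hEq', mul_nonneg (mul_nonneg hV0 hN0.le) (by linarith : (0:ℝ) ≤ (n:ℝ) - 1),
      mul_nonneg hV0 hN0.le, hα1', hS2]
  · rw [le_div_iff₀ (by positivity : (0:ℝ) < (n:ℝ) ^ 2), div_mul_eq_mul_div, le_div_iff₀ hα0]
    nlinarith [hEq', mul_nonneg hV0 hN0.le, hα1', hS2]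
end

section
/- In the Edge Model on a connected graph G with m edges and parameter α ∈ (0,1), define the potential φ̄_V(ξ) = (1/(2n))·Σ_{x,y∈V} (ξ_x − ξ_y)². Then for every t ≥ 0, E( φ̄_V(ξ(t)) ) ≤ ( 1 − (α(1−α)/m)·λ₂(L) )^t · φ̄_V(ξ(0)), where λ₂(L) is the second-smallest eigenvalue of the graph Laplacian L = D − A. -/
open MeasureTheory ProbabilityTheory Finset

/-- The potential `φ̄_V(ξ) = (1/(2n)) Σ_{x,y} (ξ_x - ξ_y)²`. -/
noncomputable def phibar {n : ℕ} (ξ : Fin n → ℝ) : ℝ :=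
  (1 / (2 * (n : ℝ))) * ∑ x, ∑ y, (ξ x - ξ y) ^ 2


open scoped Matrix

set_option maxHeartbeats 1000000
set_option synthInstance.maxHeartbeats 400000

-- SPEC
lemma lap_symm_dot {n : ℕ} (G : SimpleGraph (Fin n)) [DecidableRel G.Adj] (x y : Fin n → ℝ) :
    ∑ i, (G.lapMatrix ℝ *ᵥ x) i * y i = ∑ i, x i * (G.lapMatrix ℝ *ᵥ y) i := by
  simp only [Matrix.mulVec, dotProduct, Finset.sum_mul, Finset.mul_sum]
  rw [Finset.sum_comm]
  refine Finset.sum_congr rfl fun i _ => Finset.sum_congr rfl fun j _ => ?_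
  rw [(G.isSymm_lapMatrix (R := ℝ)).apply i j]
  ring

lemma lap_col_sum_zero {n : ℕ} (G : SimpleGraph (Fin n)) [DecidableRel G.Adj] (j : Fin n) :
    ∑ i, (G.lapMatrix ℝ) i j = 0 := by
  have h := congrFun (G.lapMatrix_mulVec_const_eq_zero (R := ℝ)) j
  simp only [Matrix.mulVec, dotProduct, mul_one, Pi.zero_apply] at h
  calc ∑ i, (G.lapMatrix ℝ) i j = ∑ i, (G.lapMatrix ℝ) j i := by
        refine Finset.sum_congr rfl fun i _ => (G.isSymm_lapMatrix (R := ℝ)).apply j i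
    _ = 0 := h

lemma rayleigh_lap {n : ℕ} (G : SimpleGraph (Fin n)) [DecidableRel G.Adj]
    {lam2 : ℝ} (hlam : IsSecondEigenvalueL G lam2)
    (f : Fin n → ℝ) (hf : ∑ x, f x = 0) :
    lam2 * (∑ x, f x ^ 2) ≤ ∑ i, f i * (G.lapMatrix ℝ *ᵥ f) i := by
  classical
  let E := EuclideanSpace ℝ (Fin n)
  let ℓ : E →ₗ[ℝ] ℝ :=
    { toFun := fun x => ∑ i, x i
      map_add' := fun a b => by
        show ∑ i, (a i + b i) = _
        simp [Finset.sum_add_distrib]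
      map_smul' := fun c a => by
        show ∑ i, c * a i = _
        simp [Finset.mul_sum] }
  let W : Submodule ℝ E := LinearMap.ker ℓ
  have hmemW : ∀ (x : E), x ∈ W ↔ ∑ i, x i = 0 := fun x => Iff.rfl
  let T0 : E →ₗ[ℝ] E := Matrix.toEuclideanLin (G.lapMatrix ℝ)
  have hT0 : ∀ (x : E) (i : Fin n), T0 x i = (G.lapMatrix ℝ *ᵥ x) i := by
    intro x i
    rw [show T0 x = (WithLp.equiv 2 (Fin n → ℝ)).symm
        ((G.lapMatrix ℝ) *ᵥ (WithLp.equiv 2 (Fin n → ℝ)) x) from Matrix.toEuclideanLin_apply _ _]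
    rfl
  have hmaps : ∀ x ∈ W, T0 x ∈ W := by
    intro x hx
    rw [hmemW] at *
    have h2 : ∑ i, T0 x i = ∑ j, (∑ i, (G.lapMatrix ℝ) i j) * x j := by
      simp only [hT0, Matrix.mulVec, dotProduct, Finset.sum_mul]
      rw [Finset.sum_comm]
    simp [h2, lap_col_sum_zero]
  let T : W →ₗ[ℝ] W := T0.restrict hmaps
  have hTcoe : ∀ a : W, ((T a : W) : E) = T0 (a : E) := fun a => rfl
  have hsymm : T.IsSymmetric := by
    intro a b
    show (@inner ℝ E _ ((T a : E)) ((b : E))) = @inner ℝ E _ ((a : E)) ((T b : E))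
    rw [hTcoe, hTcoe]
    simp only [E, PiLp.inner_apply, RCLike.inner_apply', starRingEnd_apply, star_trivial]
    calc ∑ i, T0 a i * (b : E) i = ∑ i, (a : E) i * T0 b i := by
          simp only [hT0]
          exact lap_symm_dot G (a : E) (b : E)
      _ = _ := rfl
  obtain ⟨f0, hf0ne, hf0eig, hf0sum⟩ := hlam.1
  have hw0 : ((WithLp.equiv 2 (Fin n → ℝ)).symm f0) ∈ W := by
    rw [hmemW]; simpa using hf0sum
  haveI : Nontrivial W := by
    refine nontrivial_of_ne ⟨_, hw0⟩ 0 ?_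
    intro h
    have h2 : ((WithLp.equiv 2 (Fin n → ℝ)).symm f0) = 0 := by
      exact congrArg Subtype.val h
    exact hf0ne ((WithLp.equiv 2 (Fin n → ℝ)).symm.injective (by simpa using h2))
  set μ : ℝ := ⨅ x : {x : W // x ≠ 0}, RCLike.re (@inner ℝ W _ (T x) (x : W)) / ‖(x : W)‖ ^ 2
    with hμ
  have heig : Module.End.HasEigenvalue T μ := by
    exact hsymm.hasEigenvalue_iInf_of_finiteDimensional
  obtain ⟨v, hv⟩ := heig.exists_hasEigenvector
  have hveq : T v = μ • v := hv.apply_eq_smul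
  have hlam2μ : lam2 ≤ μ := by
    apply hlam.2
    refine ⟨fun i => (v : E) i, ?_, ?_, ?_⟩
    · intro h
      apply hv.2
      have h3 : (v : E) = 0 := PiLp.ext fun i => congrFun h i
      exact Subtype.coe_injective h3
    · funext i
      have h4 := congrArg (fun z : W => (z : E) i) hveq
      simp only [hTcoe] at h4
      rw [show ((G.lapMatrix ℝ).mulVec fun i => (v : E) i) i
            = (G.lapMatrix ℝ *ᵥ (v : E)) i from rfl, ← hT0]
      exact h4
    · exact (hmemW _).mp v.2
  -- lower bound for the Rayleigh quotient
  let Tc := LinearMap.toContinuousLinearMap T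
  have hbdd : BddBelow (Set.range fun x : {x : W // x ≠ 0} =>
      RCLike.re (@inner ℝ W _ (T x) (x : W)) / ‖(x : W)‖ ^ 2) := by
    refine ⟨-‖Tc‖, ?_⟩
    rintro r ⟨x, rfl⟩
    have hx0 : (0 : ℝ) < ‖(x : W)‖ ^ 2 := by
      have h5 : (0:ℝ) < ‖(x : W)‖ := norm_pos_iff.mpr x.2
      positivity
    rw [le_div_iff₀ hx0]
    have h1 : |@inner ℝ W _ (T (x : W)) ((x : W) : W)| ≤ ‖T (x : W)‖ * ‖(x : W)‖ :=
      abs_real_inner_le_norm _ _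
    have h2 : ‖T (x : W)‖ ≤ ‖Tc‖ * ‖(x : W)‖ := by
      have := Tc.le_opNorm (x : W)
      simpa [Tc, LinearMap.coe_toContinuousLinearMap'] using this
    have h6 : RCLike.re (@inner ℝ W _ (T (x : W)) ((x : W) : W))
        = @inner ℝ W _ (T (x : W)) ((x : W) : W) := rfl
    rw [h6]
    nlinarith [neg_abs_le (@inner ℝ W _ (T (x : W)) ((x : W) : W)), norm_nonneg ((x : W) : W),
      norm_nonneg (T (x : W))]
  rcases eq_or_ne f 0 with rfl | hne
  · simp
  · have hfW : ((WithLp.equiv 2 (Fin n → ℝ)).symm f) ∈ W := by rw [hmemW]; simpa using hf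
    set w : W := ⟨_, hfW⟩ with hw
    have hwne : w ≠ 0 := by
      intro h
      have h2 : ((WithLp.equiv 2 (Fin n → ℝ)).symm f) = 0 := by
        exact congrArg Subtype.val h
      exact hne ((WithLp.equiv 2 (Fin n → ℝ)).symm.injective (by simpa using h2))
    have h2 : μ ≤ RCLike.re (@inner ℝ W _ (T w) (w : W)) / ‖(w : W)‖ ^ 2 :=
      ciInf_le hbdd ⟨w, hwne⟩
    have hwsq : ‖(w : W)‖ ^ 2 = ∑ x, f x ^ 2 := by
      rw [← real_inner_self_eq_norm_sq]
      show (@inner ℝ E _ ((w : E)) ((w : E))) = _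
      simp only [E, PiLp.inner_apply, RCLike.inner_apply', starRingEnd_apply, star_trivial]
      exact Finset.sum_congr rfl fun i _ => by
        show f i * f i = f i ^ 2
        ring
    have hTw : RCLike.re (@inner ℝ W _ (T w) (w : W)) = ∑ i, f i * (G.lapMatrix ℝ *ᵥ f) i := by
      show (@inner ℝ E _ ((T w : E)) ((w : E))) = _
      rw [hTcoe]
      simp only [E, PiLp.inner_apply, RCLike.inner_apply', starRingEnd_apply, star_trivial]
      calc ∑ i, T0 w i * (w : E) i = ∑ i, (G.lapMatrix ℝ *ᵥ f) i * f i := by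
            refine Finset.sum_congr rfl fun i _ => ?_
            rw [hT0]
            rfl
        _ = _ := by
            refine Finset.sum_congr rfl fun i _ => ?_
            ring
    have hsumpos : (0 : ℝ) < ∑ x, f x ^ 2 := by
      have h7 : ∃ i, f i ≠ 0 := by
        by_contra h
        push_neg at h
        exact hne (funext h)
      obtain ⟨i, hi⟩ := h7
      refine Finset.sum_pos' (fun j _ => sq_nonneg _) ⟨i, Finset.mem_univ i, by positivity⟩
    have h8 := le_trans hlam2μ h2
    rw [hTw, hwsq, le_div_iff₀ hsumpos] at h8
    linarith

-- COMB
section A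
variable {n : ℕ}

lemma phibar_nonneg (ξ : Fin n → ℝ) : 0 ≤ phibar ξ := by
  unfold phibar
  positivity

lemma double_sum_sq (ξ : Fin n → ℝ) :
    ∑ x, ∑ y, (ξ x - ξ y)^2 = 2 * n * (∑ x, ξ x ^ 2) - 2 * (∑ x, ξ x)^2 := by
  have inner : ∀ x, ∑ y, (ξ x - ξ y)^2
      = n * ξ x^2 - 2*(ξ x * ∑ y, ξ y) + ∑ y, ξ y^2 := by
    intro x
    have h : ∀ y, (ξ x - ξ y)^2 = ξ x^2 - 2*(ξ x * ξ y) + ξ y^2 := fun y => by ring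
    rw [Finset.sum_congr rfl fun y _ => h y]
    rw [Finset.sum_add_distrib, Finset.sum_sub_distrib, Finset.sum_const, Finset.card_univ,
      Fintype.card_fin, nsmul_eq_mul, ← Finset.mul_sum, ← Finset.mul_sum]
  rw [Finset.sum_congr rfl fun x _ => inner x]
  rw [Finset.sum_add_distrib, Finset.sum_sub_distrib, Finset.sum_const, Finset.card_univ,
    Fintype.card_fin, nsmul_eq_mul, ← Finset.mul_sum, ← Finset.mul_sum, ← Finset.sum_mul]
  ring

lemma phibar_eq (hn : 0 < n) (ξ : Fin n → ℝ) :
    phibar ξ = (∑ x, ξ x ^ 2) - (∑ x, ξ x) ^ 2 / n := by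
  have hn' : (n:ℝ) ≠ 0 := Nat.cast_ne_zero.mpr hn.ne'
  unfold phibar
  rw [double_sum_sq]
  field_simp

lemma edgeUpdate_eq (α : ℝ) (e : EdgeStep n) (ξ : Fin n → ℝ) :
    edgeUpdate α e ξ = Function.update ξ e.1 (α * ξ e.1 + (1-α) * ξ e.2) := by
  funext w
  unfold edgeUpdate
  rcases eq_or_ne w e.1 with rfl|hw
  · simp
  · simp [Function.update_apply, hw]

lemma sum_update_univ (h : Fin n → ℝ) (i : Fin n) (a : ℝ) :
    ∑ x, Function.update h i a x = (∑ x, h x) - h i + a := by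
  rw [Finset.sum_update_of_mem (Finset.mem_univ i)]
  rw [Finset.sdiff_singleton_eq_erase, Finset.sum_erase_eq_sub (Finset.mem_univ i)]
  ring

lemma phibar_update (hn : 0 < n) (α : ℝ) (e : EdgeStep n) (ξ : Fin n → ℝ) :
    phibar (edgeUpdate α e ξ) =
      phibar ξ + 2 * ξ e.1 * ((1-α)*(ξ e.2 - ξ e.1)) + ((1-α)*(ξ e.2 - ξ e.1))^2
        - (2 * (∑ x, ξ x) * ((1-α)*(ξ e.2 - ξ e.1)) + ((1-α)*(ξ e.2 - ξ e.1))^2) / n := by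
  have hn' : (n:ℝ) ≠ 0 := Nat.cast_ne_zero.mpr hn.ne'
  rw [edgeUpdate_eq]
  set a := α * ξ e.1 + (1-α) * ξ e.2 with ha
  rw [phibar_eq hn, phibar_eq hn]
  have hs1 : ∑ x, Function.update ξ e.1 a x = (∑ x, ξ x) - ξ e.1 + a :=
    sum_update_univ ξ e.1 a
  have hs2 : ∑ x, (Function.update ξ e.1 a x) ^ 2 = (∑ x, ξ x ^ 2) - ξ e.1 ^ 2 + a ^ 2 := by
    have hcomm : ∀ x, (Function.update ξ e.1 a x) ^ 2
        = Function.update (fun y => ξ y ^ 2) e.1 (a ^ 2) x := fun x =>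
      (Function.apply_update (fun _ y => y ^ 2) ξ e.1 a x)
    simp_rw [hcomm]
    exact sum_update_univ _ e.1 _
  rw [hs1, hs2]
  have haδ : a = ξ e.1 + (1-α)*(ξ e.2 - ξ e.1) := by rw [ha]; ring
  rw [haδ]
  field_simp
  ring


end A

-- STEP
section B
variable {n : ℕ} (G : SimpleGraph (Fin n)) [DecidableRel G.Adj]

lemma swap_sum (g : Fin n → Fin n → ℝ) :
    ∑ e ∈ Finset.univ.filter (fun p : EdgeStep n => G.Adj p.1 p.2), g e.1 e.2
      = ∑ e ∈ Finset.univ.filter (fun p : EdgeStep n => G.Adj p.1 p.2), g e.2 e.1 := by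
  refine Finset.sum_equiv (Equiv.prodComm (Fin n) (Fin n)) ?_ ?_
  · intro p
    simp [SimpleGraph.adj_comm]
  · intro p _
    rfl

lemma antisym_sum_zero (g : Fin n → Fin n → ℝ) (hg : ∀ u v, g v u = - g u v) :
    ∑ e ∈ Finset.univ.filter (fun p : EdgeStep n => G.Adj p.1 p.2), g e.1 e.2 = 0 := by
  have h := swap_sum G g
  have h2 : ∑ e ∈ Finset.univ.filter (fun p : EdgeStep n => G.Adj p.1 p.2), g e.2 e.1
      = - ∑ e ∈ Finset.univ.filter (fun p : EdgeStep n => G.Adj p.1 p.2), g e.1 e.2 := by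
    rw [← Finset.sum_neg_distrib]
    exact Finset.sum_congr rfl fun e _ => hg e.1 e.2
  rw [h2] at h
  linarith

lemma card_dirEdges :
    ((Finset.univ.filter (fun p : EdgeStep n => G.Adj p.1 p.2)).card : ℝ)
      = 2 * (G.edgeFinset.card : ℝ) := by
  have h1 : (Finset.univ.filter (fun p : EdgeStep n => G.Adj p.1 p.2)).card
      = ∑ u, G.degree u := by
    rw [Finset.card_filter, Fintype.sum_prod_type]
    refine Finset.sum_congr rfl fun u _ => ?_
    rw [← SimpleGraph.card_neighborFinset_eq_degree, SimpleGraph.neighborFinset_eq_filter,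
      Finset.card_filter]
  rw [h1, SimpleGraph.sum_degrees_eq_twice_card_edges]
  push_cast
  ring

lemma lap_quadform (g : Fin n → ℝ) :
    ∑ e ∈ Finset.univ.filter (fun p : EdgeStep n => G.Adj p.1 p.2), (g e.1 - g e.2)^2
      = 2 * ∑ i, g i * (G.lapMatrix ℝ *ᵥ g) i := by
  have h := G.lapMatrix_toLinearMap₂' (R := ℝ) g
  rw [Matrix.toLinearMap₂'_apply'] at h
  have h2 : dotProduct g (G.lapMatrix ℝ *ᵥ g) = ∑ i, g i * (G.lapMatrix ℝ *ᵥ g) i := rfl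
  rw [h2] at h
  have h3 : ∑ e ∈ Finset.univ.filter (fun p : EdgeStep n => G.Adj p.1 p.2), (g e.1 - g e.2)^2
      = ∑ i, ∑ j, if G.Adj i j then (g i - g j)^2 else 0 := by
    rw [Finset.sum_filter, Fintype.sum_prod_type]
  rw [h3, h]
  ring

lemma step_sum (hn : 1 < n) (hconn : G.Connected) {α : ℝ} (hα : α ∈ Set.Ioo (0:ℝ) 1)
    {lam2 : ℝ} (hlam : IsSecondEigenvalueL G lam2) (ξ : Fin n → ℝ) :
    ∑ e ∈ Finset.univ.filter (fun p : EdgeStep n => G.Adj p.1 p.2), phibar (edgeUpdate α e ξ)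
      ≤ (2 * (G.edgeFinset.card : ℝ)) *
        ((1 - α * (1-α) / (G.edgeFinset.card : ℝ) * lam2) * phibar ξ) := by
  classical
  have hn0 : 0 < n := by omega
  have hnR : (0:ℝ) < n := by exact_mod_cast hn0
  set D := Finset.univ.filter (fun p : EdgeStep n => G.Adj p.1 p.2) with hD
  set S := ∑ x, ξ x with hS
  set Q := ∑ e ∈ D, (ξ e.1 - ξ e.2)^2 with hQ
  -- m > 0
  have hm : (0:ℝ) < (G.edgeFinset.card : ℝ) := by
    obtain ⟨w⟩ := hconn.preconnected ⟨0, by omega⟩ ⟨1, hn⟩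
    cases w with
    | @cons _ v _ h _ =>
      have hedge : s(_, v) ∈ G.edgeFinset := SimpleGraph.mem_edgeFinset.mpr h
      have : 0 < G.edgeFinset.card := Finset.card_pos.mpr ⟨_, hedge⟩
      exact_mod_cast this
  -- pointwise expansion + summation
  have hsum : ∑ e ∈ D, phibar (edgeUpdate α e ξ)
      = (D.card : ℝ) * phibar ξ - (1-α) * Q + (1-α)^2 * Q - ((1-α)^2 * Q) / n := by
    rw [Finset.sum_congr rfl fun e _ => phibar_update hn0 α e ξ]
    have hA0 : ∑ e ∈ D, (ξ e.2 - ξ e.1) = 0 :=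
      antisym_sum_zero G (fun u v => ξ v - ξ u) (fun u v => by ring)
    have hsq0 : ∑ e ∈ D, (ξ e.2^2 - ξ e.1^2) = 0 :=
      antisym_sum_zero G (fun u v => ξ v^2 - ξ u^2) (fun u v => by ring)
    have hx : ∑ e ∈ D, 2 * ξ e.1 * ((1-α)*(ξ e.2 - ξ e.1)) = -((1-α) * Q) := by
      have hc : ∀ e : EdgeStep n, 2 * ξ e.1 * ((1-α)*(ξ e.2 - ξ e.1))
          = (1-α) * ((ξ e.2^2 - ξ e.1^2) - (ξ e.1 - ξ e.2)^2) := fun e => by ring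
      rw [Finset.sum_congr rfl fun e _ => hc e, ← Finset.mul_sum, Finset.sum_sub_distrib,
        hsq0, hQ]
      ring
    have hδsq : ∑ e ∈ D, ((1-α)*(ξ e.2 - ξ e.1))^2 = (1-α)^2 * Q := by
      have hc : ∀ e : EdgeStep n, ((1-α)*(ξ e.2 - ξ e.1))^2
          = (1-α)^2 * (ξ e.1 - ξ e.2)^2 := fun e => by ring
      rw [Finset.sum_congr rfl fun e _ => hc e, ← Finset.mul_sum, hQ]
    have hδ : ∑ e ∈ D, 2 * S * ((1-α)*(ξ e.2 - ξ e.1)) = 0 := by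
      have hc : ∀ e : EdgeStep n, 2 * S * ((1-α)*(ξ e.2 - ξ e.1))
          = (2 * S * (1-α)) * (ξ e.2 - ξ e.1) := fun e => by ring
      rw [Finset.sum_congr rfl fun e _ => hc e, ← Finset.mul_sum, hA0, mul_zero]
    rw [Finset.sum_sub_distrib, Finset.sum_add_distrib, Finset.sum_add_distrib,
      Finset.sum_const, nsmul_eq_mul, hx, hδsq, ← Finset.sum_div, Finset.sum_add_distrib,
      hδ, hδsq]
    ring
  -- Q ≥ 2 lam2 phibar
  have hQlam : 2 * lam2 * phibar ξ ≤ Q := by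
    set c := S / n with hc
    set g : Fin n → ℝ := fun x => ξ x - c with hg
    have hgsum : ∑ x, g x = 0 := by
      rw [hg]
      simp only [Finset.sum_sub_distrib, Finset.sum_const, Finset.card_univ, Fintype.card_fin,
        nsmul_eq_mul, hc]
      field_simp
      simp [hS]
    have hQg : Q = ∑ e ∈ D, (g e.1 - g e.2)^2 := by
      refine Finset.sum_congr rfl fun e _ => ?_
      rw [hg]
      ring
    have hφg : phibar ξ = ∑ x, g x ^ 2 := by
      rw [phibar_eq hn0]
      have hexp : ∑ x, g x ^ 2 = (∑ x, ξ x^2) - 2*c*S + n * c^2 := by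
        have hc2 : ∀ x, g x ^ 2 = ξ x^2 - 2*c*ξ x + c^2 := fun x => by rw [hg]; ring
        rw [Finset.sum_congr rfl fun x _ => hc2 x, Finset.sum_add_distrib,
          Finset.sum_sub_distrib, Finset.sum_const, Finset.card_univ, Fintype.card_fin,
          nsmul_eq_mul, ← Finset.mul_sum, ← hS]
        try ring
      rw [hexp, hc, hS]
      field_simp
      try ring
    have hray := rayleigh_lap G hlam g hgsum
    have hquad := lap_quadform G g
    rw [hQg, hquad, hφg]
    linarith
  have hQ0 : (0:ℝ) ≤ Q := Finset.sum_nonneg fun e _ => sq_nonneg _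
  have hαpos : 0 < α * (1-α) := mul_pos hα.1 (by linarith [hα.2])
  have hcard := card_dirEdges G
  have hRHS : (2 * (G.edgeFinset.card : ℝ)) *
      ((1 - α * (1-α) / (G.edgeFinset.card : ℝ) * lam2) * phibar ξ)
      = 2 * (G.edgeFinset.card : ℝ) * phibar ξ - 2 * (α * (1-α) * lam2 * phibar ξ) := by
    have hmm : (G.edgeFinset.card:ℝ) * (α*(1-α)/(G.edgeFinset.card:ℝ)) = α*(1-α) :=
      mul_div_cancel₀ _ hm.ne'
    linear_combination (-2 * lam2 * phibar ξ) * hmm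
  rw [hsum, hRHS, hcard]
  have h1 : α * (1-α) * (2 * lam2 * phibar ξ) ≤ α * (1-α) * Q :=
    mul_le_mul_of_nonneg_left hQlam (le_of_lt hαpos)
  have h2 : 0 ≤ ((1-α)^2 * Q) / n := by positivity
  nlinarith [h1, h2]


end B

lemma factor_nonneg {n : ℕ} (hn : 1 < n) (G : SimpleGraph (Fin n)) [DecidableRel G.Adj]
    (hconn : G.Connected) {α : ℝ} (hα : α ∈ Set.Ioo (0:ℝ) 1)
    {lam2 : ℝ} (hlam : IsSecondEigenvalueL G lam2) :
    0 ≤ 1 - α * (1-α) / (G.edgeFinset.card : ℝ) * lam2 := by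
  classical
  have hn0 : 0 < n := by omega
  set z : Fin n := ⟨0, by omega⟩
  set ξs : Fin n → ℝ := fun x => if x = z then (1:ℝ) else 0 with hξs
  have hsum1 : ∑ x, ξs x = 1 := by simp [hξs]
  have hsumsq : ∑ x, ξs x ^ 2 = 1 := by
    have h : ∀ x, ξs x ^ 2 = ξs x := by
      intro x
      rw [hξs]
      by_cases hx : x = z <;> simp [hx]
    rw [Finset.sum_congr rfl fun x _ => h x, hsum1]
  have hφ : phibar ξs = 1 - 1 / n := by
    rw [phibar_eq hn0, hsum1, hsumsq]
    ring
  have hφpos : 0 < phibar ξs := by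
    rw [hφ]
    have h1 : (1:ℝ) < n := by exact_mod_cast hn
    have h2 : (1:ℝ)/n < 1 := by
      rw [div_lt_one (by linarith)]
      exact h1
    linarith
  have h0 : (0:ℝ) ≤ ∑ e ∈ Finset.univ.filter (fun p : EdgeStep n => G.Adj p.1 p.2),
      phibar (edgeUpdate α e ξs) := Finset.sum_nonneg fun e _ => phibar_nonneg _
  have h2 := step_sum G hn hconn hα hlam ξs
  have hm : (0:ℝ) < (G.edgeFinset.card : ℝ) := by
    obtain ⟨w⟩ := hconn.preconnected ⟨0, by omega⟩ ⟨1, hn⟩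
    cases w with
    | @cons _ v _ h _ =>
      have hedge : s(_, v) ∈ G.edgeFinset := SimpleGraph.mem_edgeFinset.mpr h
      have : 0 < G.edgeFinset.card := Finset.card_pos.mpr ⟨_, hedge⟩
      exact_mod_cast this
  by_contra hneg
  push_neg at hneg
  have hlt : (1 - α * (1-α) / ((G.edgeFinset.card : ℕ) : ℝ) * lam2) * phibar ξs < 0 :=
    mul_neg_of_neg_of_pos hneg hφpos
  have hlt2 : 2 * ((G.edgeFinset.card : ℕ) : ℝ) *
      ((1 - α * (1-α) / ((G.edgeFinset.card : ℕ) : ℝ) * lam2) * phibar ξs) < 0 :=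
    mul_neg_of_pos_of_neg (by linarith) hlt
  linarith

lemma traj_agree {n : ℕ} (α : ℝ) (ξ0 : Fin n → ℝ) :
    ∀ (t : ℕ) (ω ω' : ℕ → EdgeStep n), (∀ k, k < t → ω k = ω' k) →
      edgeTraj α ξ0 ω t = edgeTraj α ξ0 ω' t := by
  intro t
  induction t with
  | zero => intros; rfl
  | succ t ih =>
    intro ω ω' h
    show edgeUpdate α (ω t) (edgeTraj α ξ0 ω t) = edgeUpdate α (ω' t) (edgeTraj α ξ0 ω' t)
    rw [h t (Nat.lt_succ_self t), ih ω ω' (fun k hk => h k (by omega))]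

/-- **Proposition 5(ii) (potential drop in the Edge Model).**
In the Edge Model on a connected graph `G` with `m` edges and parameter `α ∈ (0,1)`,
for every `t ≥ 0`,
`E( φ̄_V(ξ(t)) ) ≤ ( 1 - (α(1-α)/m)·λ₂(L) )^t · φ̄_V(ξ(0))`,
where `λ₂(L)` is the second-smallest eigenvalue of the Laplacian `L = D - A`. -/
theorem edge_model_potential_drop {n : ℕ} (hn : 1 < n)
    (G : SimpleGraph (Fin n)) [DecidableRel G.Adj] (hconn : G.Connected)
    (α : ℝ) (hα : α ∈ Set.Ioo (0 : ℝ) 1)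
    (lam2 : ℝ) (hlam : IsSecondEigenvalueL G lam2)
    (ξ0 : Fin n → ℝ)
    (Ω : Type) (mΩ : MeasurableSpace Ω) (Pr : Measure Ω) (hPr : IsProbabilityMeasure Pr)
    (steps : ℕ → Ω → EdgeStep n) (hmeas : ∀ t, Measurable (steps t))
    (hiid : iIndepFun steps Pr)
    (hdist : ∀ t, Measure.map (steps t) Pr = (edgeStepPMF G hconn hn).toMeasure) :
    ∀ t : ℕ,
      ∫ ω, phibar (edgeTraj α ξ0 (fun s => steps s ω) t) ∂Pr ≤
        (1 - α * (1 - α) / (G.edgeFinset.card : ℝ) * lam2) ^ t * phibar ξ0 := by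
  classical
  set fbar : ℝ := 1 - α * (1 - α) / (G.edgeFinset.card : ℝ) * lam2 with hfbar
  have hfbar0 : 0 ≤ fbar := factor_nonneg hn G hconn hα hlam
  set D := Finset.univ.filter (fun p : EdgeStep n => G.Adj p.1 p.2) with hDdef
  have hDne : D.Nonempty := exists_adj_pair G hconn hn
  have hDcard : (0:ℝ) < (D.card : ℝ) := by
    have : 0 < D.card := Finset.card_pos.mpr hDne
    exact_mod_cast this
  intro t
  induction t with
  | zero =>
    have h0 : (fun ω => phibar (edgeTraj α ξ0 (fun s => steps s ω) 0)) = fun _ => phibar ξ0 :=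
      rfl
    rw [h0, integral_const]
    simp
  | succ t ih =>
    obtain ⟨e0, _⟩ := hDne
    set J : (Fin t → EdgeStep n) → ℕ → EdgeStep n :=
      fun s k => if h : k < t then s ⟨k, h⟩ else e0 with hJ
    set F : (Fin t → EdgeStep n) → Fin n → ℝ := fun s => edgeTraj α ξ0 (J s) t with hF
    set X : Ω → (Fin t → EdgeStep n) := fun ω i => steps i ω with hX
    have hXtraj : ∀ ω : Ω, edgeTraj α ξ0 (fun s => steps s ω) t = F (X ω) := by
      intro ω
      refine traj_agree α ξ0 t _ _ (fun k hk => ?_)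
      simp only [hJ, hX, hk, dif_pos]
    have hXmeas : Measurable X := measurable_pi_lambda _ fun i => hmeas i
    have hindep : IndepFun X (steps t) Pr := by
      have h := hiid.indepFun_finset (Finset.range t) {t} (by simp) hmeas
      have hφ1 : Measurable (fun f : {x // x ∈ Finset.range t} → EdgeStep n =>
          fun i : Fin t => f ⟨(i : ℕ), Finset.mem_range.mpr i.isLt⟩) :=
        measurable_pi_lambda _ fun i => measurable_pi_apply _
      have hφ2 : Measurable (fun f : {x // x ∈ ({t} : Finset ℕ)} → EdgeStep n =>
          f ⟨t, Finset.mem_singleton_self t⟩) := measurable_pi_apply _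
      exact h.comp hφ1 hφ2
    have hmapXY : Pr.map (fun ω => (X ω, steps t ω)) = (Pr.map X).prod (Pr.map (steps t)) :=
      (indepFun_iff_map_prod_eq_prod_map_map hXmeas.aemeasurable
        (hmeas t).aemeasurable).mp hindep
    haveI : IsProbabilityMeasure (Pr.map X) := Measure.isProbabilityMeasure_map hXmeas.aemeasurable
    haveI : IsProbabilityMeasure (Pr.map (steps t)) :=
      Measure.isProbabilityMeasure_map (hmeas t).aemeasurable
    set g : ((Fin t → EdgeStep n) × EdgeStep n) → ℝ :=
      fun p => phibar (edgeUpdate α p.2 (F p.1)) with hg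
    have hgmeas : Measurable g := measurable_of_countable g
    have hinner : ∀ s, ∫ e, g (s, e) ∂(Pr.map (steps t)) ≤ fbar * phibar (F s) := by
      intro s
      rw [hdist t, integral_fintype (Integrable.of_finite)]
      simp only [Measure.real]
      have hsingle : ∀ e : EdgeStep n, ((edgeStepPMF G hconn hn).toMeasure {e}).toReal =
          if e ∈ D then ((D.card : ℝ))⁻¹ else 0 := by
        intro e
        rw [PMF.toMeasure_apply_singleton _ _ (measurableSet_singleton e)]
        rw [edgeStepPMF, PMF.uniformOfFinset_apply]
        split_ifs
        · simp [hDdef]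
        · simp
      have hsum : ∑ e : EdgeStep n, ((edgeStepPMF G hconn hn).toMeasure {e}).toReal • g (s, e)
          = ((D.card : ℝ))⁻¹ * ∑ e ∈ D, phibar (edgeUpdate α e (F s)) := by
        rw [Finset.mul_sum]
        rw [show (∑ e : EdgeStep n, ((edgeStepPMF G hconn hn).toMeasure {e}).toReal • g (s, e))
            = ∑ e : EdgeStep n, (if e ∈ D then ((D.card : ℝ))⁻¹ * g (s, e) else 0) from
          Finset.sum_congr rfl fun e _ => by rw [hsingle e, smul_eq_mul, ite_mul, zero_mul]]
        rw [Finset.sum_ite_mem, Finset.univ_inter]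
      rw [hsum]
      have hstep := step_sum G hn hconn hα hlam (F s)
      have hc2m : ((D.card : ℝ))⁻¹ * (2 * (G.edgeFinset.card : ℝ)) = 1 := by
        rw [← card_dirEdges G, ← hDdef]
        exact inv_mul_cancel₀ hDcard.ne'
      calc ((D.card : ℝ))⁻¹ * ∑ e ∈ D, phibar (edgeUpdate α e (F s))
          ≤ ((D.card : ℝ))⁻¹ * ((2 * (G.edgeFinset.card : ℝ)) * (fbar * phibar (F s))) := by
            apply mul_le_mul_of_nonneg_left _ (by positivity)
            exact hstep
        _ = fbar * phibar (F s) := by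
            rw [← mul_assoc, hc2m, one_mul]
    have hFmeas : Measurable (fun s => phibar (F s)) := measurable_of_countable _
    calc ∫ ω, phibar (edgeTraj α ξ0 (fun s => steps s ω) (t+1)) ∂Pr
        = ∫ ω, g (X ω, steps t ω) ∂Pr := by
          refine integral_congr_ae (Filter.Eventually.of_forall fun ω => ?_)
          show phibar (edgeUpdate α (steps t ω) (edgeTraj α ξ0 (fun s => steps s ω) t)) = _
          rw [hXtraj ω]
      _ = ∫ p, g p ∂(Pr.map (fun ω => (X ω, steps t ω))) :=
          (integral_map (hXmeas.prodMk (hmeas t)).aemeasurable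
            hgmeas.aestronglyMeasurable).symm
      _ = ∫ p, g p ∂((Pr.map X).prod (Pr.map (steps t))) := by rw [hmapXY]
      _ = ∫ s, (∫ e, g (s, e) ∂(Pr.map (steps t))) ∂(Pr.map X) :=
          integral_prod g (Integrable.of_finite)
      _ ≤ ∫ s, fbar * phibar (F s) ∂(Pr.map X) := by
          refine integral_mono (Integrable.of_finite) (Integrable.of_finite) ?_
          intro s
          exact hinner s
      _ = fbar * ∫ s, phibar (F s) ∂(Pr.map X) := integral_const_mul _ _
      _ = fbar * ∫ ω, phibar (F (X ω)) ∂Pr := by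
          rw [integral_map hXmeas.aemeasurable hFmeas.aestronglyMeasurable]
      _ = fbar * ∫ ω, phibar (edgeTraj α ξ0 (fun s => steps s ω) t) ∂Pr := by
          congr 1
          refine integral_congr_ae (Filter.Eventually.of_forall fun ω => ?_)
          exact congrArg phibar (hXtraj ω).symm
      _ ≤ fbar * (fbar ^ t * phibar ξ0) := mul_le_mul_of_nonneg_left ih hfbar0
      _ = fbar ^ (t+1) * phibar ξ0 := by ring
end
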